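/- Let $A$ be an admissible ring with basis of ideals of definition $\{I_i\}$, let $I \subseteq A$ be a closed ideal, and let $B$ be an admissible ring with basis of ideals of definition $\{J_i\}$, together with a continuous homomorphism $A \to B$ such that the image of $I_i$ in $B$ lies in $J_i$ for every $i$. Then there is a topological ring isomorphism $(A/I) \hat{\otimes}_A B \cong B/\overline{IB}$, where $(A/I)\hat{\otimes}_A B := \varprojlim_i \left( (A/(I_i+I)) \otimes_{A/I_i} B/J_i \right)$ and $\overline{IB}$ is the topological closure of the ideal $IB$ in $B$. -/

import Mathlib

open Filter Topology

/-- The descending chain `I` of ideals is a basis of neighborhoods of `0`. -/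
def IsChainBasis (A : Type*) [CommRing A] [TopologicalSpace A] (I : ℕ → Ideal A) : Prop :=
  Antitone I ∧ ∀ s : Set A, s ∈ nhds (0 : A) ↔ ∃ i, (I i : Set A) ⊆ s

/-- An ideal of definition: an open ideal all of whose elements are topologically nilpotent. -/
def IsIdealOfDefinition (A : Type*) [CommRing A] [TopologicalSpace A] (J : Ideal A) : Prop :=
  IsOpen (J : Set A) ∧ ∀ x ∈ J, Filter.Tendsto (fun n => x ^ n) Filter.atTop (nhds (0 : A))

/-- An admissible ring: a topological ring, linearly topologized with a countable chain of
ideals as a basis of neighborhoods of `0`, separated, complete, admitting an ideal of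
definition. -/
structure IsAdmissible (A : Type*) [CommRing A] [TopologicalSpace A] : Prop where
  topRing : IsTopologicalRing A
  exists_chain : ∃ I : ℕ → Ideal A, IsChainBasis A I
  separated : ∀ x : A, (∀ U ∈ nhds (0 : A), x ∈ U) → x = 0
  complete : ∀ f : ℕ → A,
    (∀ U ∈ nhds (0 : A), ∃ N, ∀ m ≥ N, ∀ n ≥ N, f m - f n ∈ U) →
    ∃ a : A, ∀ U ∈ nhds (0 : A), ∃ N, ∀ n ≥ N, a - f n ∈ U
  exists_idealOfDef : ∃ J : Ideal A, IsIdealOfDefinition A J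


section CompletedTensor

variable (A : Type*) [CommRing A] (B : Type*) [CommRing B] (φ : A →+* B)
  (I' : Ideal A) (I : ℕ → Ideal A) (J : ℕ → Ideal B)
  (hmap : ∀ i, Ideal.map φ (I i) ≤ J i)

/-- The structural homomorphism `A ⧸ I i → B ⧸ J i` induced by `φ`. -/
noncomputable def rN (i : ℕ) : A ⧸ I i →+* B ⧸ J i :=
  Ideal.Quotient.lift (I i) ((Ideal.Quotient.mk (J i)).comp φ)
    (fun a ha => by
      have h : φ a ∈ J i := hmap i (Ideal.mem_map_of_mem φ ha)
      simpa [RingHom.comp_apply, Ideal.Quotient.eq_zero_iff_mem] using h)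

/-- `A ⧸ (I' ⊔ I i)` as an `A ⧸ I i`-algebra. -/
noncomputable def algM (i : ℕ) : Algebra (A ⧸ I i) (A ⧸ (I' ⊔ I i)) :=
  (Ideal.Quotient.factor (S := I i) (T := I' ⊔ I i) le_sup_right).toAlgebra

/-- `B ⧸ J i` as an `A ⧸ I i`-algebra. -/
noncomputable def algN (i : ℕ) : Algebra (A ⧸ I i) (B ⧸ J i) :=
  (rN A B φ I J hmap i).toAlgebra

/-- The level-`i` tensor product `(A/(I' + Iᵢ)) ⊗_{A/Iᵢ} (B/Jᵢ)`. -/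
noncomputable def tensorLevel (i : ℕ) : Type _ :=
  letI := algM A I' I i
  letI := algN A B φ I J hmap i
  TensorProduct (A ⧸ I i) (A ⧸ (I' ⊔ I i)) (B ⧸ J i)

noncomputable instance tensorLevelCommRing (i : ℕ) :
    CommRing (tensorLevel A B φ I' I J hmap i) :=
  letI := algM A I' I i
  letI := algN A B φ I J hmap i
  (inferInstance : CommRing (TensorProduct (A ⧸ I i) (A ⧸ (I' ⊔ I i)) (B ⧸ J i)))

end CompletedTensor

section CompletedTensor2

variable (A : Type*) [CommRing A] (B : Type*) [CommRing B] (φ : A →+* B)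
  (I' : Ideal A) (I : ℕ → Ideal A) (J : ℕ → Ideal B)
  (hmap : ∀ i, Ideal.map φ (I i) ≤ J i)
  (hdesc : ∀ i, I (i + 1) ≤ I i) (hJdesc : ∀ i, J (i + 1) ≤ J i)

/-- The transition map between consecutive levels of the completed tensor product. -/
noncomputable def tensorTrans (i : ℕ) :
    tensorLevel A B φ I' I J hmap (i + 1) →+* tensorLevel A B φ I' I J hmap i :=
  letI := algM A I' I i
  letI := algN A B φ I J hmap i
  letI := algM A I' I (i + 1)
  letI := algN A B φ I J hmap (i + 1)
  letI : Algebra (A ⧸ I (i + 1))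
      (TensorProduct (A ⧸ I i) (A ⧸ (I' ⊔ I i)) (B ⧸ J i)) :=
    ((algebraMap (A ⧸ I i) (TensorProduct (A ⧸ I i) (A ⧸ (I' ⊔ I i)) (B ⧸ J i))).comp
      (Ideal.Quotient.factor (S := I (i + 1)) (T := I i) (hdesc i))).toAlgebra
  letI f1 : (A ⧸ (I' ⊔ I (i + 1))) →ₐ[A ⧸ I (i + 1)]
      TensorProduct (A ⧸ I i) (A ⧸ (I' ⊔ I i)) (B ⧸ J i) :=
    { toRingHom := (Algebra.TensorProduct.includeLeftRingHom :
          (A ⧸ (I' ⊔ I i)) →+* TensorProduct (A ⧸ I i) (A ⧸ (I' ⊔ I i)) (B ⧸ J i)).comp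
        (Ideal.Quotient.factor (S := I' ⊔ I (i + 1)) (T := I' ⊔ I i) (sup_le_sup_left (hdesc i) I'))
      commutes' := fun r => Quotient.inductionOn' r (fun a => by
        simp only [RingHom.coe_comp, RingHom.coe_coe, Function.comp_apply,
          RingHom.algebraMap_toAlgebra, RingHom.comp_apply]
        show Algebra.TensorProduct.includeLeftRingHom
            (Ideal.Quotient.factor _ (Ideal.Quotient.factor _ (Ideal.Quotient.mk _ a)))
          = algebraMap (A ⧸ I i) _ (Ideal.Quotient.factor _ (Ideal.Quotient.mk _ a))
        rw [Ideal.Quotient.factor_mk, Ideal.Quotient.factor_mk, Ideal.Quotient.factor_mk,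
          Algebra.TensorProduct.includeLeftRingHom_apply, Algebra.TensorProduct.algebraMap_apply]
        rfl) }
  letI f2 : (B ⧸ J (i + 1)) →ₐ[A ⧸ I (i + 1)]
      TensorProduct (A ⧸ I i) (A ⧸ (I' ⊔ I i)) (B ⧸ J i) :=
    { toRingHom := ((Algebra.TensorProduct.includeRight :
          (B ⧸ J i) →ₐ[A ⧸ I i]
            TensorProduct (A ⧸ I i) (A ⧸ (I' ⊔ I i)) (B ⧸ J i)).toRingHom).comp
        (Ideal.Quotient.factor (S := J (i + 1)) (T := J i) (hJdesc i))
      commutes' := fun r => Quotient.inductionOn' r (fun a => by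
        simp only [RingHom.coe_comp, RingHom.coe_coe, Function.comp_apply,
          RingHom.algebraMap_toAlgebra, RingHom.comp_apply]
        show Algebra.TensorProduct.includeRight
            (Ideal.Quotient.factor _ (rN A B φ I J hmap (i+1) (Ideal.Quotient.mk _ a)))
          = algebraMap (A ⧸ I i) _ (Ideal.Quotient.factor _ (Ideal.Quotient.mk _ a))
        rw [Ideal.Quotient.factor_mk, Algebra.TensorProduct.algebraMap_apply']
        show Algebra.TensorProduct.includeRight
            (Ideal.Quotient.factor _ ((Ideal.Quotient.mk (J (i+1))) (φ a)))
          = 1 ⊗ₜ[A ⧸ I i] algebraMap (A ⧸ I i) (B ⧸ J i) (Ideal.Quotient.mk (I i) a)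
        rw [Ideal.Quotient.factor_mk, Algebra.TensorProduct.includeRight_apply]
        rfl) }
  (Algebra.TensorProduct.lift f1 f2 (fun x y => Commute.all _ _)).toRingHom

end CompletedTensor2

section CompletedTensor3

variable (A : Type*) [CommRing A] (B : Type*) [CommRing B] (φ : A →+* B)
  (I' : Ideal A) (I : ℕ → Ideal A) (J : ℕ → Ideal B)
  (hmap : ∀ i, Ideal.map φ (I i) ≤ J i)
  (hdesc : ∀ i, I (i + 1) ≤ I i) (hJdesc : ∀ i, J (i + 1) ≤ J i)

/-- The completed tensor product `(A/I') ⊗̂_A B`, realized as the inverse limit of the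
level tensor products along the transition maps. -/
noncomputable def limTensor : Subring (∀ i, tensorLevel A B φ I' I J hmap i) where
  carrier := {g | ∀ i, tensorTrans A B φ I' I J hmap hdesc hJdesc i (g (i + 1)) = g i}
  zero_mem' := by intro i; simp
  one_mem' := by intro i; simp
  add_mem' := by intro a b ha hb i; simp [map_add, ha i, hb i]
  mul_mem' := by intro a b ha hb i; simp [map_mul, ha i, hb i]
  neg_mem' := by intro a ha i; simp [map_neg, ha i]

/-- The inverse limit topology on the completed tensor product (each level discrete). -/
noncomputable def limTensorTopology :
    TopologicalSpace (limTensor A B φ I' I J hmap hdesc hJdesc) :=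
  TopologicalSpace.induced Subtype.val
    (@Pi.topologicalSpace ℕ (fun i => tensorLevel A B φ I' I J hmap i) (fun _ => ⊥))

end CompletedTensor3


section Aux
variable {A : Type*} [CommRing A] {B : Type*} [CommRing B] (φ : A →+* B)
  (I' : Ideal A) (I : ℕ → Ideal A) (J : ℕ → Ideal B)
  (hmap : ∀ i, Ideal.map φ (I i) ≤ J i)
  (hdesc : ∀ i, I (i + 1) ≤ I i) (hJdesc : ∀ i, J (i + 1) ≤ J i)

/-- The ideal `I'B + Jᵢ`. -/
def myK (i : ℕ) : Ideal B := Ideal.map φ I' ⊔ J i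

noncomputable def toQuot (i : ℕ) :
    tensorLevel A B φ I' I J hmap i →+* B ⧸ myK φ I' J i :=
  letI := algM A I' I i
  letI := algN A B φ I J hmap i
  letI : Algebra (A ⧸ I i) (B ⧸ myK φ I' J i) :=
    ((Ideal.Quotient.factor (S := J i) (T := myK φ I' J i) (show J i ≤ myK φ I' J i from le_sup_right)).comp
      (rN A B φ I J hmap i)).toAlgebra
  letI f1 : (A ⧸ (I' ⊔ I i)) →ₐ[A ⧸ I i] B ⧸ myK φ I' J i :=
    { toRingHom := Ideal.Quotient.lift (I' ⊔ I i)
        ((Ideal.Quotient.mk (myK φ I' J i)).comp φ)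
        (fun a ha => by
          have hm : φ a ∈ myK φ I' J i := by
            rcases Submodule.mem_sup.mp ha with ⟨x, hx, y, hy, rfl⟩
            rw [map_add]
            exact Ideal.add_mem _
              (le_sup_left (a := Ideal.map φ I') (Ideal.mem_map_of_mem φ hx))
              (le_sup_right (a := Ideal.map φ I') (hmap i (Ideal.mem_map_of_mem φ hy)))
          simpa only [RingHom.comp_apply, Ideal.Quotient.eq_zero_iff_mem] using hm)
      commutes' := fun r => Quotient.inductionOn' r (fun a => rfl) }
  letI f2 : (B ⧸ J i) →ₐ[A ⧸ I i] B ⧸ myK φ I' J i :=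
    { toRingHom := Ideal.Quotient.factor (S := J i) (T := myK φ I' J i) (show J i ≤ myK φ I' J i from le_sup_right)
      commutes' := fun r => rfl }
  (Algebra.TensorProduct.lift f1 f2 (fun x y => Commute.all _ _)).toRingHom

noncomputable def fromQuot (i : ℕ) :
    B ⧸ myK φ I' J i →+* tensorLevel A B φ I' I J hmap i :=
  letI := algM A I' I i
  letI := algN A B φ I J hmap i
  Ideal.Quotient.lift (myK φ I' J i)
    ((Algebra.TensorProduct.includeRight (R := A ⧸ I i) (A := A ⧸ (I' ⊔ I i))
        (B := B ⧸ J i)).toRingHom.comp (Ideal.Quotient.mk (J i)))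
    (by
      intro b hb
      have hker : Ideal.map φ I' ≤ RingHom.ker
          ((Algebra.TensorProduct.includeRight (R := A ⧸ I i) (A := A ⧸ (I' ⊔ I i))
            (B := B ⧸ J i)).toRingHom.comp (Ideal.Quotient.mk (J i))) := by
        rw [Ideal.map_le_iff_le_comap]
        intro a ha
        simp only [Ideal.mem_comap, RingHom.mem_ker, RingHom.comp_apply]
        have : (Ideal.Quotient.mk (J i)) (φ a) =
            algebraMap (A ⧸ I i) (B ⧸ J i) (Ideal.Quotient.mk (I i) a) := rfl
        rw [this]
        show Algebra.TensorProduct.includeRight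
            ((algebraMap (A ⧸ I i) (B ⧸ J i)) ((Ideal.Quotient.mk (I i)) a)) = 0
        rw [AlgHom.commutes, Algebra.TensorProduct.algebraMap_apply]
        have : algebraMap (A ⧸ I i) (A ⧸ (I' ⊔ I i)) (Ideal.Quotient.mk (I i) a) = 0 := by
          show Ideal.Quotient.factor (S := I i) (T := I' ⊔ I i) le_sup_right (Ideal.Quotient.mk (I i) a) = 0
          rw [Ideal.Quotient.factor_mk, Ideal.Quotient.eq_zero_iff_mem]
          exact le_sup_left (b := I i) ha
        rw [this, TensorProduct.zero_tmul]
      have hJker : J i ≤ RingHom.ker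
          ((Algebra.TensorProduct.includeRight (R := A ⧸ I i) (A := A ⧸ (I' ⊔ I i))
            (B := B ⧸ J i)).toRingHom.comp (Ideal.Quotient.mk (J i))) := by
        intro y hy
        rw [RingHom.mem_ker, RingHom.comp_apply, Ideal.Quotient.eq_zero_iff_mem.mpr hy, map_zero]
      exact RingHom.mem_ker.mp ((sup_le hker hJker) hb))

lemma toQuot_fromQuot (i : ℕ) (x : B ⧸ myK φ I' J i) :
    toQuot φ I' I J hmap i (fromQuot φ I' I J hmap i x) = x := by
  letI := algM A I' I i
  letI := algN A B φ I J hmap i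
  letI : Algebra (A ⧸ I i) (B ⧸ myK φ I' J i) :=
    ((Ideal.Quotient.factor (S := J i) (T := myK φ I' J i) (show J i ≤ myK φ I' J i from le_sup_right)).comp
      (rN A B φ I J hmap i)).toAlgebra
  obtain ⟨b, rfl⟩ := Ideal.Quotient.mk_surjective x
  unfold fromQuot toQuot
  erw [Ideal.Quotient.lift_mk]
  erw [RingHom.comp_apply]
  erw [Algebra.TensorProduct.lift_tmul]
  rw [map_one, one_mul]
  erw [Ideal.Quotient.factor_mk]
  exact le_sup_right

lemma fromQuot_toQuot (i : ℕ) (x : tensorLevel A B φ I' I J hmap i) :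
    fromQuot φ I' I J hmap i (toQuot φ I' I J hmap i x) = x := by
  letI := algM A I' I i
  letI := algN A B φ I J hmap i
  letI : Algebra (A ⧸ I i) (B ⧸ myK φ I' J i) :=
    ((Ideal.Quotient.factor (S := J i) (T := myK φ I' J i) (show J i ≤ myK φ I' J i from le_sup_right)).comp
      (rN A B φ I J hmap i)).toAlgebra
  have key : ∀ y : TensorProduct (A ⧸ I i) (A ⧸ (I' ⊔ I i)) (B ⧸ J i),
      fromQuot φ I' I J hmap i (toQuot φ I' I J hmap i y) = y := by
    intro y
    induction y using TensorProduct.induction_on with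
    | zero =>
      show fromQuot φ I' I J hmap i (toQuot φ I' I J hmap i (0 : tensorLevel A B φ I' I J hmap i)) = 0
      rw [map_zero, map_zero]
    | add u v hu hv =>
      show fromQuot φ I' I J hmap i (toQuot φ I' I J hmap i
        ((u : tensorLevel A B φ I' I J hmap i) + (v : tensorLevel A B φ I' I J hmap i))) = _
      erw [map_add, map_add, hu, hv]
      rfl
    | tmul m n =>
      obtain ⟨a, rfl⟩ := Ideal.Quotient.mk_surjective m
      obtain ⟨b, rfl⟩ := Ideal.Quotient.mk_surjective n
      unfold toQuot fromQuot
      erw [Algebra.TensorProduct.lift_tmul]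
      simp only [AlgHom.coe_mk, RingHom.coe_mk, MonoidHom.coe_mk, OneHom.coe_mk]
      rw [Ideal.Quotient.lift_mk]
      erw [RingHom.comp_apply]
      erw [Ideal.Quotient.factor_mk (show J i ≤ myK φ I' J i from le_sup_right), ← map_mul, Ideal.Quotient.lift_mk]
      erw [RingHom.comp_apply]
      have h1 : (Ideal.Quotient.mk (J i)) (φ a * b)
          = algebraMap (A ⧸ I i) (B ⧸ J i) ((Ideal.Quotient.mk (I i)) a)
            * (Ideal.Quotient.mk (J i)) b := by
        rw [map_mul]; rfl
      rw [h1]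
      erw [Algebra.TensorProduct.includeRight_apply]
      rw [← Algebra.smul_def, TensorProduct.tmul_smul, TensorProduct.smul_tmul',
        Algebra.smul_def, mul_one]
      show (Ideal.Quotient.factor (S := I i) (T := I' ⊔ I i) le_sup_right)
          ((Ideal.Quotient.mk (I i)) a) ⊗ₜ[A ⧸ I i] (Ideal.Quotient.mk (J i)) b = _
      rw [Ideal.Quotient.factor_mk]
  exact key x

lemma trans_fromQuot (i : ℕ) (x : B ⧸ myK φ I' J (i + 1)) :
    tensorTrans A B φ I' I J hmap hdesc hJdesc i (fromQuot φ I' I J hmap (i + 1) x)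
      = fromQuot φ I' I J hmap i
          (Ideal.Quotient.factor (S := myK φ I' J (i + 1)) (T := myK φ I' J i) (show myK φ I' J (i + 1) ≤ myK φ I' J i from sup_le_sup_left (hJdesc i) _) x) := by
  letI := algM A I' I i
  letI := algN A B φ I J hmap i
  letI := algM A I' I (i + 1)
  letI := algN A B φ I J hmap (i + 1)
  letI : Algebra (A ⧸ I (i + 1)) (TensorProduct (A ⧸ I i) (A ⧸ (I' ⊔ I i)) (B ⧸ J i)) :=
    ((algebraMap (A ⧸ I i) (TensorProduct (A ⧸ I i) (A ⧸ (I' ⊔ I i)) (B ⧸ J i))).comp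
      (Ideal.Quotient.factor (S := I (i + 1)) (T := I i) (hdesc i))).toAlgebra
  letI : Algebra (A ⧸ I (i + 1)) (tensorLevel A B φ I' I J hmap i) :=
    ((algebraMap (A ⧸ I i) (TensorProduct (A ⧸ I i) (A ⧸ (I' ⊔ I i)) (B ⧸ J i))).comp
      (Ideal.Quotient.factor (S := I (i + 1)) (T := I i) (hdesc i))).toAlgebra
  obtain ⟨b, rfl⟩ := Ideal.Quotient.mk_surjective x
  unfold fromQuot tensorTrans
  erw [Ideal.Quotient.lift_mk, Ideal.Quotient.factor_mk, Ideal.Quotient.lift_mk]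
  erw [RingHom.comp_apply]
  erw [Algebra.TensorProduct.includeRight_apply]
  erw [Algebra.TensorProduct.lift_tmul]
  erw [map_one (F := (A ⧸ (I' ⊔ I (i + 1))) →ₐ[A ⧸ I (i + 1)]
    TensorProduct (A ⧸ I i) (A ⧸ (I' ⊔ I i)) (B ⧸ J i)), one_mul]
  show Algebra.TensorProduct.includeRight
      ((Ideal.Quotient.factor (S := J (i + 1)) (T := J i) (hJdesc i))
        ((Ideal.Quotient.mk (J (i + 1))) b))
    = Algebra.TensorProduct.includeRight ((Ideal.Quotient.mk (J i)) b)
  rw [Ideal.Quotient.factor_mk]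

lemma toQuot_trans (i : ℕ) (x : tensorLevel A B φ I' I J hmap (i + 1)) :
    toQuot φ I' I J hmap i (tensorTrans A B φ I' I J hmap hdesc hJdesc i x)
      = Ideal.Quotient.factor (S := myK φ I' J (i + 1)) (T := myK φ I' J i) (show myK φ I' J (i + 1) ≤ myK φ I' J i from sup_le_sup_left (hJdesc i) _) (toQuot φ I' I J hmap (i + 1) x) := by
  conv_lhs => rw [← fromQuot_toQuot φ I' I J hmap (i + 1) x]
  rw [trans_fromQuot φ I' I J hmap hdesc hJdesc, toQuot_fromQuot]

/-- The canonical map `B → (A/I') ⊗̂_A B`. -/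
noncomputable def psi : B →+* limTensor A B φ I' I J hmap hdesc hJdesc where
  toFun b := ⟨fun i => fromQuot φ I' I J hmap i (Ideal.Quotient.mk (myK φ I' J i) b),
    fun i => by
      rw [trans_fromQuot φ I' I J hmap hdesc hJdesc, Ideal.Quotient.factor_mk]⟩
  map_one' := Subtype.ext (funext fun i => by simp only [map_one]; rfl)
  map_mul' x y := Subtype.ext (funext fun i => by simp only [map_mul]; rfl)
  map_zero' := Subtype.ext (funext fun i => by simp only [map_zero]; rfl)
  map_add' x y := Subtype.ext (funext fun i => by simp only [map_add]; rfl)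

lemma psi_coord (b : B) (i : ℕ) :
    (psi φ I' I J hmap hdesc hJdesc b).1 i
      = fromQuot φ I' I J hmap i (Ideal.Quotient.mk (myK φ I' J i) b) := rfl


lemma mem_closure_iff_basis {B : Type*} [CommRing B] [TopologicalSpace B] [IsTopologicalRing B]
    (J : ℕ → Ideal B) (hJbasis : IsChainBasis B J) (S : Ideal B) (x : B) :
    x ∈ closure (S : Set B) ↔ ∀ i, ∃ y ∈ S, x - y ∈ J i := by
  constructor
  · intro hx i
    have hc : ContinuousAt (fun y : B => x - y) x := by fun_prop
    have h0 : (J i : Set B) ∈ nhds ((fun y : B => x - y) x) := by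
      simpa using (hJbasis.2 (J i)).mpr ⟨i, le_rfl⟩
    obtain ⟨y, hy1, hy2⟩ := mem_closure_iff_nhds.mp hx _ (hc.preimage_mem_nhds h0)
    exact ⟨y, hy2, hy1⟩
  · intro h
    rw [mem_closure_iff_nhds]
    intro U hU
    have hc : ContinuousAt (fun j : B => x - j) 0 := by fun_prop
    have hT : (fun j : B => x - j) ⁻¹' U ∈ nhds (0 : B) := by
      apply hc.preimage_mem_nhds
      simpa using hU
    obtain ⟨i, hi⟩ := (hJbasis.2 _).mp hT
    obtain ⟨y, hyS, hyJ⟩ := h i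
    refine ⟨y, ?_, hyS⟩
    have h2 := hi hyJ
    simpa [sub_sub_cancel] using h2

end Aux

/-- `(A/I') ⊗̂_A B ≅ B ⧸ closure(I'B)` as topological rings, for admissible rings `A`, `B`
with bases of ideals of definition `{Iᵢ}`, `{Jᵢ}`, a continuous homomorphism `φ : A → B`
with `φ(Iᵢ) ⊆ Jᵢ`, and a closed ideal `I' ⊆ A`. -/
theorem stmt_18 (A : Type*) [CommRing A] [TopologicalSpace A]
    (B : Type*) [CommRing B] [TopologicalSpace B] [IsTopologicalRing B]
    (hA : IsAdmissible A) (hB : IsAdmissible B)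
    (I : ℕ → Ideal A) (J : ℕ → Ideal B)
    (hIbasis : IsChainBasis A I) (hIdef : ∀ i, IsIdealOfDefinition A (I i))
    (hJbasis : IsChainBasis B J) (hJdef : ∀ i, IsIdealOfDefinition B (J i))
    (φ : A →+* B) (hφ : Continuous φ)
    (hmap : ∀ i, Ideal.map φ (I i) ≤ J i)
    (I' : Ideal A) (hI' : IsClosed (I' : Set A))
    (hdesc : ∀ i, I (i + 1) ≤ I i) (hJdesc : ∀ i, J (i + 1) ≤ J i) :
    letI := limTensorTopology A B φ I' I J hmap hdesc hJdesc
    ∃ e : (limTensor A B φ I' I J hmap hdesc hJdesc) ≃+*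
        (B ⧸ (Ideal.map φ I').topologicalClosure),
      Continuous e ∧ Continuous e.symm := by
  classical
  obtain ⟨hJanti, hJnhds⟩ := id hJbasis
  letI tT : ∀ i, TopologicalSpace (tensorLevel A B φ I' I J hmap i) := fun _ => ⊥
  haveI hdT : ∀ i, DiscreteTopology (tensorLevel A B φ I' I J hmap i) := fun _ => ⟨rfl⟩
  letI tL : TopologicalSpace (limTensor A B φ I' I J hmap hdesc hJdesc) :=
    limTensorTopology A B φ I' I J hmap hdesc hJdesc
  set Kc : Ideal B := (Ideal.map φ I').topologicalClosure with hKc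
  have hJmem : ∀ i, (J i : Set B) ∈ nhds (0 : B) := fun i => (hJnhds _).mpr ⟨i, le_rfl⟩
  have closKey : ∀ x : B, x ∈ Kc ↔ ∀ i, x ∈ myK φ I' J i := by
    intro x
    have h1 : x ∈ Kc ↔ x ∈ closure ((Ideal.map φ I' : Ideal B) : Set B) := Iff.rfl
    rw [h1, mem_closure_iff_basis J hJbasis]
    constructor
    · intro h i
      obtain ⟨y, hyS, hyJ⟩ := h i
      exact Submodule.mem_sup.mpr ⟨y, hyS, x - y, hyJ, by ring⟩
    · intro h i
      obtain ⟨y, hyS, z, hzJ, hyz⟩ := Submodule.mem_sup.mp (h i)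
      refine ⟨y, hyS, ?_⟩
      have : x - y = z := by rw [← hyz]; ring
      rw [this]; exact hzJ
  set ψ := psi φ I' I J hmap hdesc hJdesc with hψdef
  have hkill : ∀ b ∈ Kc, ψ b = 0 := by
    intro b hb
    apply Subtype.ext; funext i
    show fromQuot φ I' I J hmap i (Ideal.Quotient.mk (myK φ I' J i) b) = 0
    rw [Ideal.Quotient.eq_zero_iff_mem.mpr ((closKey b).mp hb i), map_zero]
  set ψbar : B ⧸ Kc →+* limTensor A B φ I' I J hmap hdesc hJdesc :=
    Ideal.Quotient.lift Kc ψ hkill with hψbar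
  have hψbar_mk : ∀ b : B, ψbar (Ideal.Quotient.mk Kc b) = ψ b := fun b => rfl
  -- injectivity
  have hinj : Function.Injective ψbar := by
    rw [injective_iff_map_eq_zero]
    intro x hx
    obtain ⟨b, rfl⟩ := Ideal.Quotient.mk_surjective x
    rw [Ideal.Quotient.eq_zero_iff_mem, closKey]
    intro i
    have h0 : fromQuot φ I' I J hmap i (Ideal.Quotient.mk (myK φ I' J i) b) = 0 := by
      have := congrFun (congrArg Subtype.val hx) i
      exact this
    have h1 := congrArg (toQuot φ I' I J hmap i) h0
    rw [toQuot_fromQuot, map_zero] at h1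
    exact Ideal.Quotient.eq_zero_iff_mem.mp h1
  -- surjectivity
  have hsurj : Function.Surjective ψbar := by
    intro g
    have hrep : ∀ i, ∃ b : B,
        Ideal.Quotient.mk (myK φ I' J i) b = toQuot φ I' I J hmap i (g.1 i) := fun i =>
      Ideal.Quotient.mk_surjective _
    choose b hb using hrep
    have hstep : ∀ i, b (i + 1) - b i ∈ myK φ I' J i := by
      intro i
      rw [← Ideal.Quotient.eq]
      have h1 : Ideal.Quotient.mk (myK φ I' J i) (b (i + 1))
          = Ideal.Quotient.factor (S := myK φ I' J (i + 1)) (T := myK φ I' J i) (show myK φ I' J (i + 1) ≤ myK φ I' J i from sup_le_sup_left (hJdesc i) _)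
              (Ideal.Quotient.mk (myK φ I' J (i + 1)) (b (i + 1))) :=
        (Ideal.Quotient.factor_mk _ _).symm
      rw [h1, hb (i + 1), ← toQuot_trans φ I' I J hmap hdesc hJdesc, g.2 i, hb i]
    have hexists : ∀ (i : ℕ) (x : B), x - b i ∈ Ideal.map φ I' →
        ∃ x' : B, (x' - b (i + 1) ∈ Ideal.map φ I') ∧ x' - x ∈ J i := by
      intro i x hx
      have hmem : b (i + 1) - x ∈ myK φ I' J i := by
        have h2 : b i - x ∈ myK φ I' J i :=
          le_sup_left (a := Ideal.map φ I') (b := J i)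
            (by simpa using (Ideal.map φ I').neg_mem hx)
        have h3 : b (i + 1) - x = (b (i + 1) - b i) + (b i - x) := by ring
        rw [h3]; exact Ideal.add_mem _ (hstep i) h2
      obtain ⟨u, hu, v, hv, huv⟩ := Submodule.mem_sup.mp hmem
      refine ⟨x + v, ?_, by simpa using hv⟩
      have h4 : x + v - b (i + 1) = -u := by linear_combination huv
      rw [h4]; exact (Ideal.map φ I').neg_mem hu
    choose F hF1 hF2 using hexists
    let gc : (i : ℕ) → {x : B // x - b i ∈ Ideal.map φ I'} := fun i =>
      Nat.rec ⟨b 0, by simp⟩ (fun j p => ⟨F j p.1 p.2, hF1 j p.1 p.2⟩) i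
    set c : ℕ → B := fun i => (gc i).1 with hcdef
    have hc1 : ∀ i, c i - b i ∈ Ideal.map φ I' := fun i => (gc i).2
    have hc2 : ∀ i, c (i + 1) - c i ∈ J i := fun i => hF2 i (gc i).1 (gc i).2
    have hcauchy : ∀ n m, n ≤ m → c m - c n ∈ J n := by
      intro n m h
      induction m, h using Nat.le_induction with
      | base => simpa using (J n).zero_mem
      | succ m hm ih =>
        have h5 : c (m + 1) - c n = (c (m + 1) - c m) + (c m - c n) := by ring
        rw [h5]
        exact Ideal.add_mem _ (hJanti hm (hc2 m)) ih
    obtain ⟨l, hl⟩ := hB.complete c (by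
      intro U hU
      obtain ⟨i, hi⟩ := (hJnhds U).mp hU
      refine ⟨i, fun m hm n hn => ?_⟩
      rcases le_total n m with h | h
      · exact hi (hJanti hn (hcauchy n m h))
      · have h6 : c m - c n = -(c n - c m) := by ring
        rw [h6]
        exact hi ((J i).neg_mem (hJanti hm (hcauchy m n h))))
    have hfin : ∀ i, Ideal.Quotient.mk (myK φ I' J i) l
        = Ideal.Quotient.mk (myK φ I' J i) (b i) := by
      intro i
      have hJl : l - c i ∈ J i := by
        obtain ⟨N, hN⟩ := hl (J i) (hJmem i)
        have h7 := hN (max N i) (le_max_left _ _)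
        have h8 : c (max N i) - c i ∈ J i := hcauchy i _ (le_max_right _ _)
        have h9 : l - c i = (l - c (max N i)) + (c (max N i) - c i) := by ring
        rw [h9]; exact Ideal.add_mem _ h7 h8
      rw [Ideal.Quotient.eq]
      have h10 : l - b i = (l - c i) + (c i - b i) := by ring
      rw [h10]
      exact Ideal.add_mem _
        (le_sup_right (a := Ideal.map φ I') (b := J i) hJl)
        (le_sup_left (a := Ideal.map φ I') (b := J i) (hc1 i))
    refine ⟨Ideal.Quotient.mk Kc l, ?_⟩
    apply Subtype.ext; funext i
    show fromQuot φ I' I J hmap i (Ideal.Quotient.mk (myK φ I' J i) l) = g.1 i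
    rw [hfin i, hb i, fromQuot_toQuot]
  set E := RingEquiv.ofBijective ψbar ⟨hinj, hsurj⟩ with hE
  have hEapp : ∀ x, E x = ψbar x := fun x => rfl
  -- continuity of ψ
  have hcoord : ∀ i, Continuous fun x : B =>
      fromQuot φ I' I J hmap i (Ideal.Quotient.mk (myK φ I' J i) x) := by
    intro i
    refine continuous_def.mpr fun S _ => ?_
    rw [isOpen_iff_mem_nhds]
    intro x hxS
    set f := fun y : B => fromQuot φ I' I J hmap i (Ideal.Quotient.mk (myK φ I' J i) y)
      with hfdef
    have hsub : (J i : Set B) ⊆ (fun z : B => x + z) ⁻¹' (f ⁻¹' S) := by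
      intro j hj
      simp only [Set.mem_preimage]
      have hz : Ideal.Quotient.mk (myK φ I' J i) j = 0 :=
        Ideal.Quotient.eq_zero_iff_mem.mpr
          (le_sup_right (a := Ideal.map φ I') (b := J i) hj)
      have h11 : Ideal.Quotient.mk (myK φ I' J i) (x + j)
          = Ideal.Quotient.mk (myK φ I' J i) x := by
        rw [map_add, hz, add_zero]
      show f (x + j) ∈ S
      rw [hfdef]; simp only []
      rw [h11]
      exact hxS
    have hT : ((fun z : B => x + z) ⁻¹' (f ⁻¹' S)) ∈ nhds (0 : B) :=
      (hJnhds _).mpr ⟨i, hsub⟩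
    have hAt : ContinuousAt (fun y : B => y - x) x := by fun_prop
    have h12 := hAt.preimage_mem_nhds (by simpa using hT)
    have h13 : f ⁻¹' S
        = (fun y : B => y - x) ⁻¹' ((fun z : B => x + z) ⁻¹' (f ⁻¹' S)) := by
      ext y
      simp [add_sub_cancel]
    rw [h13]
    exact h12
  have hcontψ : Continuous fun x : B => ψ x := by
    apply continuous_induced_rng.mpr
    exact continuous_pi fun i => hcoord i
  -- continuity of E
  have hcontE : Continuous (⇑E : B ⧸ Kc → limTensor A B φ I' I J hmap hdesc hJdesc) := by
    rw [continuous_def]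
    intro S hS
    rw [isOpen_coinduced (f := (Quotient.mk'' : B → B ⧸ Kc))]
    exact hcontψ.isOpen_preimage S hS
  -- continuity of E.symm
  have hcontEsymm : Continuous
      (⇑E.symm : limTensor A B φ I' I J hmap hdesc hJdesc → B ⧸ Kc) := by
    rw [continuous_def]
    intro V hV
    rw [isOpen_iff_mem_nhds]
    intro g hg
    obtain ⟨bb, hbb⟩ := Ideal.Quotient.mk_surjective (E.symm g)
    have hmkc : Continuous (Ideal.Quotient.mk Kc) := continuous_quot_mk
    have hWnhds : (Ideal.Quotient.mk Kc) ⁻¹' V ∈ nhds bb := by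
      apply hmkc.continuousAt.preimage_mem_nhds
      rw [hbb]
      exact hV.mem_nhds hg
    have hT : ((fun z : B => bb + z) ⁻¹' ((Ideal.Quotient.mk Kc) ⁻¹' V)) ∈ nhds (0 : B) := by
      have hAt : ContinuousAt (fun z : B => bb + z) 0 := by fun_prop
      apply hAt.preimage_mem_nhds
      simpa using hWnhds
    obtain ⟨i, hi⟩ := (hJnhds _).mp hT
    have hopen : IsOpen {h : limTensor A B φ I' I J hmap hdesc hJdesc | h.1 i = g.1 i} := by
      have h14 : {h : limTensor A B φ I' I J hmap hdesc hJdesc | h.1 i = g.1 i}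
          = Subtype.val ⁻¹' ((fun p : ∀ k, tensorLevel A B φ I' I J hmap k => p i)
            ⁻¹' {g.1 i}) := rfl
      rw [h14]
      exact ((isOpen_discrete _).preimage (continuous_apply i)).preimage
        continuous_induced_dom
    apply Filter.mem_of_superset (hopen.mem_nhds rfl)
    intro h hh
    simp only [Set.mem_setOf_eq] at hh
    obtain ⟨bh, hbh⟩ := Ideal.Quotient.mk_surjective (E.symm h)
    have hψh : ψ bh = h := by
      have h15 := E.apply_symm_apply h
      rw [← hbh] at h15
      exact h15
    have hψb : ψ bb = g := by
      have h15 := E.apply_symm_apply g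
      rw [← hbb] at h15
      exact h15
    have hK : bh - bb ∈ myK φ I' J i := by
      have h16 : fromQuot φ I' I J hmap i (Ideal.Quotient.mk (myK φ I' J i) bh)
          = fromQuot φ I' I J hmap i (Ideal.Quotient.mk (myK φ I' J i) bb) := by
        have e1 : (ψ bh).1 i = fromQuot φ I' I J hmap i
            (Ideal.Quotient.mk (myK φ I' J i) bh) := rfl
        have e2 : (ψ bb).1 i = fromQuot φ I' I J hmap i
            (Ideal.Quotient.mk (myK φ I' J i) bb) := rfl
        rw [← e1, ← e2, hψh, hψb, hh]
      have h17 := congrArg (toQuot φ I' I J hmap i) h16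
      rw [toQuot_fromQuot, toQuot_fromQuot] at h17
      exact (Ideal.Quotient.eq).mp h17
    obtain ⟨u, hu, v, hv, huv⟩ := Submodule.mem_sup.mp hK
    have hmkeq : Ideal.Quotient.mk Kc bh = Ideal.Quotient.mk Kc (bb + v) := by
      rw [Ideal.Quotient.eq]
      have h18 : bh - (bb + v) = u := by linear_combination -huv
      rw [h18]
      exact (Ideal.map φ I').le_topologicalClosure hu
    show E.symm h ∈ V
    rw [← hbh, hmkeq]
    exact hi hv
  exact ⟨E.symm, hcontEsymm, by rw [RingEquiv.symm_symm]; exact hcontE⟩
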